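/- If α ∈ {0,1}^n breaks the ballot condition (i.e., some prefix of length r has more than r/2 ones), then G_α lies in the two-sided ideal I_n of the exterior algebra generated by F_1, F_2, ..., F_n. -/

import Mathlib

open ExteriorAlgebra

attribute [local instance] Classical.propDecidable

/-- The generator `θ_i` of the exterior algebra `Λ(ℚ^n)`. -/
noncomputable def theta (n : ℕ) (i : Fin n) : ExteriorAlgebra ℚ (Fin n → ℚ) :=
  ExteriorAlgebra.ι ℚ (Pi.single i (1 : ℚ))

/-- For `A = {a_1 < ⋯ < a_k}`, the monomial `θ_A = θ_{a_1} ⋯ θ_{a_k}`. -/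
noncomputable def thetaA (n : ℕ) (A : Finset (Fin n)) : ExteriorAlgebra ℚ (Fin n → ℚ) :=
  ((A.sort (· ≤ ·)).map (theta n)).prod

/-- The fundamental quasisymmetric invariant `F_{1^r} = Σ_{|A| = r} θ_A`. -/
noncomputable def Fq (n r : ℕ) : ExteriorAlgebra ℚ (Fin n → ℚ) :=
  ∑ A ∈ Finset.powersetCard r (Finset.univ : Finset (Fin n)), thetaA n A

/-- Number of ones in `α` among the first `p` positions (0-indexed). -/
def onesBelow {n : ℕ} (α : Fin n → Bool) (p : ℕ) : ℕ :=
  (Finset.univ.filter (fun i : Fin n => (i : ℕ) < p ∧ α i = true)).card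

/-- `G : ({0,1}^n → Λ(ℚ^n))` satisfies the defining recursion of the `G_α`:
`G_{1^s 0^{n-s}} = F_s`, and for a word `u 0 1^s 0^{n-k-s}` (here `u = β` on the
`p = k-1` first 0-indexed positions, the distinguished `0` at 0-indexed position `p`,
then a block of `s ≥ 1` ones),
`G_{u01^s0^{n-k-s}} = G_{u1^s0^{n-k-s+1}} - (-1)^{m_1(u)} θ_k G_{u1^{s-1}0^{n-k-s+2}}`. -/
def GRec (n : ℕ) (G : (Fin n → Bool) → ExteriorAlgebra ℚ (Fin n → ℚ)) : Prop :=
  (∀ s : ℕ, s ≤ n → G (fun i => decide ((i : ℕ) < s)) = Fq n s) ∧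
  (∀ (β : Fin n → Bool) (p s : ℕ) (hs : 1 ≤ s) (hps : p + s < n),
    G (fun i => if (i : ℕ) < p then β i else decide (p < (i : ℕ) ∧ (i : ℕ) ≤ p + s))
    = G (fun i => if (i : ℕ) < p then β i else decide ((i : ℕ) < p + s))
      - ((-1 : ℚ) ^ onesBelow β p) •
        (theta n ⟨p, by omega⟩ *
          G (fun i => if (i : ℕ) < p then β i else decide ((i : ℕ) < p + s - 1))))
/-- `α` breaks the ballot condition: some prefix of length `r` has more than `r/2` ones. -/
def BreaksBallot {n : ℕ} (α : Fin n → Bool) : Prop :=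
  ∃ r : ℕ, r ≤ n ∧ r < 2 * onesBelow α r

/-! ### Auxiliary lemmas -/

lemma onesBelow_succ_lt {n : ℕ} (α : Fin n → Bool) (r : ℕ) (hr : r < n) :
    onesBelow α (r+1) = onesBelow α r + (if α ⟨r, hr⟩ then 1 else 0) := by
  classical
  unfold onesBelow
  by_cases h : α ⟨r, hr⟩ = true
  · rw [if_pos h]
    have : (Finset.univ.filter (fun i : Fin n => (i : ℕ) < r+1 ∧ α i = true))
        = insert ⟨r, hr⟩ (Finset.univ.filter (fun i : Fin n => (i : ℕ) < r ∧ α i = true)) := by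
      ext i
      simp only [Finset.mem_insert, Finset.mem_filter, Finset.mem_univ, true_and]
      constructor
      · rintro ⟨h1, h2⟩
        rcases Nat.lt_succ_iff_lt_or_eq.mp h1 with h1 | h1
        · exact Or.inr ⟨h1, h2⟩
        · exact Or.inl (Fin.ext h1)
      · rintro (rfl | ⟨h1, h2⟩)
        · exact ⟨Nat.lt_succ_self r, h⟩
        · exact ⟨Nat.lt_succ_of_lt h1, h2⟩
    rw [this, Finset.card_insert_of_notMem (by simp)]
  · rw [if_neg (by simpa using h)]
    have : (Finset.univ.filter (fun i : Fin n => (i : ℕ) < r+1 ∧ α i = true))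
        = (Finset.univ.filter (fun i : Fin n => (i : ℕ) < r ∧ α i = true)) := by
      ext i
      simp only [Finset.mem_filter, Finset.mem_univ, true_and]
      constructor
      · rintro ⟨h1, h2⟩
        rcases Nat.lt_succ_iff_lt_or_eq.mp h1 with h1 | h1
        · exact ⟨h1, h2⟩
        · exact absurd ((show i = ⟨r, hr⟩ from Fin.ext h1) ▸ h2) h
      · rintro ⟨h1, h2⟩; exact ⟨Nat.lt_succ_of_lt h1, h2⟩
    rw [this]; ring

lemma onesBelow_congr {n : ℕ} {α β : Fin n → Bool} (r : ℕ)
    (h : ∀ i : Fin n, (i : ℕ) < r → α i = β i) : onesBelow α r = onesBelow β r := by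
  unfold onesBelow
  congr 1
  apply Finset.filter_congr
  intro i _
  constructor
  · rintro ⟨h1, h2⟩; exact ⟨h1, (h i h1) ▸ h2⟩
  · rintro ⟨h1, h2⟩; exact ⟨h1, (h i h1).symm ▸ h2⟩

lemma onesBelow_mono {n : ℕ} (α : Fin n → Bool) {r r' : ℕ} (h : r ≤ r') :
    onesBelow α r ≤ onesBelow α r' := by
  apply Finset.card_le_card
  intro i
  simp only [Finset.mem_filter, Finset.mem_univ, true_and]
  rintro ⟨h1, h2⟩; exact ⟨lt_of_lt_of_le h1 h, h2⟩

lemma onesBelow_le_n {n : ℕ} (α : Fin n → Bool) (r : ℕ) : onesBelow α r ≤ n := by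
  calc onesBelow α r ≤ Finset.univ.card := Finset.card_le_card (Finset.filter_subset _ _)
  _ = n := Finset.card_univ.trans (Fintype.card_fin n)

section words
variable {n : ℕ} (β : Fin n → Bool) (p s : ℕ)

/-- the word `β 0 1^s 0^…` -/
noncomputable def wW : Fin n → Bool :=
  fun i => if (i : ℕ) < p then β i else decide (p < (i : ℕ) ∧ (i : ℕ) ≤ p + s)

/-- the word `β 1^(t-p) 0^…` -/
noncomputable def wE (t : ℕ) : Fin n → Bool :=
  fun i => if (i : ℕ) < p then β i else decide ((i : ℕ) < t)

lemma onesBelow_wW (r : ℕ) (hpr : p ≤ r) (hrn : r ≤ n) :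
    onesBelow (wW β p s) r = onesBelow (wW β p s) p + min (r - p - 1) s := by
  induction r, hpr using Nat.le_induction with
  | base => omega
  | succ r hpr ih =>
    have hrn' : r < n := by omega
    rw [onesBelow_succ_lt _ r hrn', ih (by omega)]
    have : wW β p s ⟨r, hrn'⟩ = decide (p < r ∧ r ≤ p + s) := by
      simp [wW, Nat.not_lt.mpr hpr]
    rw [this]
    by_cases h : p < r ∧ r ≤ p + s <;> simp [h] <;> omega

lemma onesBelow_wE (t r : ℕ) (hpr : p ≤ r) (hrn : r ≤ n) :
    onesBelow (wE β p t) r = onesBelow (wE β p t) p + min (r - p) (t - p) := by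
  induction r, hpr using Nat.le_induction with
  | base => omega
  | succ r hpr ih =>
    have hrn' : r < n := by omega
    rw [onesBelow_succ_lt _ r hrn', ih (by omega)]
    have : wE β p t ⟨r, hrn'⟩ = decide (r < t) := by
      simp [wE, Nat.not_lt.mpr hpr]
    rw [this]
    by_cases h : r < t <;> simp [h] <;> omega

lemma onesBelow_wW_wE (t : ℕ) : onesBelow (wW β p s) p = onesBelow (wE β p t) p := by
  apply onesBelow_congr
  intro i hi
  simp [wW, wE, hi]

/-- ballot transfer to `wE (p+s)` (claim B) -/
lemma breaks_wE_of_breaks_wW (hs : 1 ≤ s)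
    (h : ∃ r : ℕ, r ≤ n ∧ r < 2 * onesBelow (wW β p s) r) :
    ∃ r : ℕ, r ≤ n ∧ r < 2 * onesBelow (wE β p (p+s)) r := by
  obtain ⟨r, hrn, hr⟩ := h
  by_cases hrp : r ≤ p
  · refine ⟨r, hrn, ?_⟩
    have : onesBelow (wW β p s) r = onesBelow (wE β p (p+s)) r := by
      apply onesBelow_congr; intro i hi
      have hip : (i:ℕ) < p := by omega
      simp [wW, wE, hip]
    omega
  · refine ⟨r, hrn, ?_⟩
    rw [onesBelow_wE β p (p+s) r (by omega) hrn, ← onesBelow_wW_wE β p s (p+s)]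
    rw [onesBelow_wW β p s r (by omega) hrn] at hr
    omega

/-- ballot transfer to `wE (p+s-1)` (claim A) -/
lemma breaks_wE'_of_breaks_wW (hs : 1 ≤ s) (hps : p + s < n)
    (h : ∃ r : ℕ, r ≤ n ∧ r < 2 * onesBelow (wW β p s) r) :
    ∃ r : ℕ, r ≤ n ∧ r < 2 * onesBelow (wE β p (p+s-1)) r := by
  obtain ⟨r, hrn, hr⟩ := h
  by_cases hrp : r ≤ p
  · refine ⟨r, hrn, ?_⟩
    have : onesBelow (wW β p s) r = onesBelow (wE β p (p+s-1)) r := by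
      apply onesBelow_congr; intro i hi
      have hip : (i:ℕ) < p := by omega
      simp [wW, wE, hip]
    omega
  · refine ⟨p + min (r - p - 1) (s - 1), by omega, ?_⟩
    rw [onesBelow_wE β p (p+s-1) _ (by omega) (by omega), ← onesBelow_wW_wE β p s (p+s-1)]
    rw [onesBelow_wW β p s r (by omega) hrn] at hr
    omega
end words

/-- the set of "ballot defects": zeros with a later one. -/
noncomputable def Sset {n : ℕ} (α : Fin n → Bool) : Finset (Fin n) :=
  Finset.univ.filter (fun i => α i = false ∧ ∃ j : Fin n, i < j ∧ α j = true)

lemma Sset_wE_ssubset {n : ℕ} (β : Fin n → Bool) (p s : ℕ)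
    (hs : 1 ≤ s) (hps : p + s < n) (t : ℕ) (hpt : p ≤ t) :
    Sset (wE β p t) ⊂ Sset (wW β p s) := by
  have hpn : p < n := by omega
  constructor
  · intro i hi
    rw [Sset, Finset.mem_filter] at hi
    obtain ⟨-, hfalse, j, hij, htrue⟩ := hi
    have hip : (i : ℕ) < p := by
      by_contra hip
      have hit : t ≤ (i : ℕ) := by
        simp only [wE, if_neg hip, decide_eq_false_iff_not, Nat.not_lt] at hfalse
        exact hfalse
      have hjp : ¬ ((j : ℕ) < p) := by
        have := Fin.lt_def.mp hij; omega
      have hjt : ¬ ((j : ℕ) < t) := by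
        have := Fin.lt_def.mp hij; omega
      simp [wE, hjp, hjt] at htrue
    rw [Sset, Finset.mem_filter]
    refine ⟨Finset.mem_univ _, ?_, ⟨p+1, by omega⟩, ?_, ?_⟩
    · simpa [wW, hip] using (by simpa [wE, hip] using hfalse)
    · rw [Fin.lt_def]; simpa using by omega
    · simp only [wW]
      rw [if_neg (by omega)]
      simp only [decide_eq_true_eq]
      omega
  · intro hsub
    have hmem : (⟨p, hpn⟩ : Fin n) ∈ Sset (wW β p s) := by
      rw [Sset, Finset.mem_filter]
      refine ⟨Finset.mem_univ _, ?_, ⟨p+1, by omega⟩, ?_, ?_⟩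
      · simp [wW]
      · rw [Fin.lt_def]; simpa using by omega
      · simp only [wW]
        rw [if_neg (by omega)]
        simp only [decide_eq_true_eq]
        omega
    have := hsub hmem
    rw [Sset, Finset.mem_filter] at this
    obtain ⟨-, hfalse, j, hij, htrue⟩ := this
    simp only [wE, if_neg (by omega : ¬ p < p), decide_eq_false_iff_not, Nat.not_lt] at hfalse
    have hjp : ¬ ((j : ℕ) < p) := by have := Fin.lt_def.mp hij; simp at this; omega
    have hjt : ¬ ((j : ℕ) < t) := by have := Fin.lt_def.mp hij; simp at this; omega
    simp [wE, hjp, hjt] at htrue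

lemma downward_closed_of_Sset_empty {n : ℕ} (α : Fin n → Bool) (h : Sset α = ∅) :
    ∀ i j : Fin n, i ≤ j → α j = true → α i = true := by
  intro i j hij hj
  by_contra hi
  rcases eq_or_lt_of_le hij with rfl | hlt
  · exact hi hj
  · have : i ∈ Sset α := by
      rw [Sset, Finset.mem_filter]
      exact ⟨Finset.mem_univ _, Bool.not_eq_true _ ▸ (by simpa using hi), j, hlt, hj⟩
    rw [h] at this
    exact absurd this (Finset.notMem_empty _)

lemma eq_initial_of_downward_closed {n : ℕ} (α : Fin n → Bool)
    (hdc : ∀ i j : Fin n, i ≤ j → α j = true → α i = true) :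
    α = fun i : Fin n => decide ((i : ℕ) < onesBelow α n) := by
  have hfeq : (Finset.univ.filter (fun i : Fin n => (i : ℕ) < n ∧ α i = true))
      = Finset.univ.filter (fun i : Fin n => α i = true) := by
    apply Finset.filter_congr
    intro i _
    simp [i.isLt]
  funext i
  by_cases hai : α i = true
  · have hsub : Finset.Iic i ⊆ Finset.univ.filter (fun j : Fin n => α j = true) := by
      intro j hj
      rw [Finset.mem_filter]
      exact ⟨Finset.mem_univ _, hdc j i (Finset.mem_Iic.mp hj) hai⟩
    have hcard := Finset.card_le_card hsub
    rw [Fin.card_Iic] at hcard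
    rw [hai]
    have : (i : ℕ) < onesBelow α n := by
      rw [onesBelow, hfeq]; omega
    simp [this]
  · have hsub : Finset.univ.filter (fun j : Fin n => α j = true) ⊆ Finset.Iio i := by
      intro j hj
      rw [Finset.mem_filter] at hj
      rw [Finset.mem_Iio]
      by_contra hji
      exact hai (hdc i j (le_of_not_gt hji) hj.2)
    have hcard := Finset.card_le_card hsub
    rw [Fin.card_Iio] at hcard
    have : ¬ ((i : ℕ) < onesBelow α n) := by
      rw [onesBelow, hfeq]; omega
    simp only [Bool.not_eq_true] at hai
    simp [hai, this]

lemma exists_decomp {n : ℕ} (α : Fin n → Bool) (h : (Sset α).Nonempty) :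
    ∃ p s : ℕ, 1 ≤ s ∧ p + s < n ∧ α = wW α p s := by
  obtain ⟨phat, hphat⟩ := h
  set pm := (Sset α).max' ⟨phat, hphat⟩ with hpm
  have hpmmem : pm ∈ Sset α := (Sset α).max'_mem _
  rw [Sset, Finset.mem_filter] at hpmmem
  obtain ⟨-, hpfalse, j0, hj0, hj0true⟩ := hpmmem
  have hOnes : (Finset.univ.filter (fun j : Fin n => α j = true)).Nonempty :=
    ⟨j0, Finset.mem_filter.mpr ⟨Finset.mem_univ _, hj0true⟩⟩
  set qm := (Finset.univ.filter (fun j : Fin n => α j = true)).max' hOnes with hqm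
  have hqmem : qm ∈ Finset.univ.filter (fun j : Fin n => α j = true) :=
    Finset.max'_mem _ _
  have hqtrue : α qm = true := (Finset.mem_filter.mp hqmem).2
  have hqmax : ∀ j : Fin n, α j = true → j ≤ qm := by
    intro j hj
    exact Finset.le_max' _ j (Finset.mem_filter.mpr ⟨Finset.mem_univ _, hj⟩)
  have hpq : (pm : ℕ) < (qm : ℕ) := by
    have h1 : j0 ≤ qm := hqmax j0 hj0true
    have := Fin.lt_def.mp hj0
    have := Fin.le_def.mp h1
    omega
  set p := (pm : ℕ)
  set q := (qm : ℕ)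
  refine ⟨p, q - p, by omega, by have := qm.isLt; omega, ?_⟩
  have hblock : ∀ i : Fin n, p < (i : ℕ) → (i : ℕ) ≤ q → α i = true := by
    intro i hpi hiq
    by_contra hi
    have : i ∈ Sset α := by
      rw [Sset, Finset.mem_filter]
      refine ⟨Finset.mem_univ _, by simpa using hi, qm, ?_, hqtrue⟩
      rw [Fin.lt_def]
      rcases Nat.lt_or_ge (i : ℕ) q with h | h
      · exact h
      · exfalso; apply hi; have : (i : ℕ) = q := by omega
        rw [show i = qm from Fin.ext this]; exact hqtrue
    have := Finset.le_max' _ i this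
    rw [Fin.le_def] at this
    omega
  have htail : ∀ i : Fin n, q < (i : ℕ) → α i = false := by
    intro i hqi
    by_contra hi
    have := hqmax i (by simpa using hi)
    rw [Fin.le_def] at this
    omega
  funext i
  rcases Nat.lt_or_ge (i : ℕ) p with hip | hip
  · simp [wW, hip]
  · rcases Nat.eq_or_lt_of_le hip with hip2 | hip2
    · have : i = pm := Fin.ext hip2.symm
      rw [this, hpfalse]
      simp only [wW]
      rw [if_neg (by omega)]
      simp
      intro h; exact absurd h (lt_irrefl _)
    · simp only [wW]
      rw [if_neg (by omega)]
      have hqs : p + (q - p) = q := by omega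
      rcases Nat.lt_or_ge q (i : ℕ) with h | h
      · rw [htail i h]
        symm
        simp only [decide_eq_false_iff_not]
        omega
      · rw [hblock i hip2 h]
        symm
        simp only [decide_eq_true_eq]
        omega

/-- If `α` breaks the ballot condition, then `G_α` lies in the two-sided ideal `I_n`
generated by `F_1, …, F_n`. -/
theorem stmt18 (n : ℕ) (G : (Fin n → Bool) → ExteriorAlgebra ℚ (Fin n → ℚ))
    (hG : GRec n G) (α : Fin n → Bool) (hα : BreaksBallot α) :
    G α ∈ TwoSidedIdeal.span {x | ∃ r : ℕ, 1 ≤ r ∧ r ≤ n ∧ x = Fq n r} := by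
  obtain ⟨hG1, hG2⟩ := hG
  suffices H : ∀ N : ℕ, ∀ α : Fin n → Bool, (Sset α).card ≤ N → BreaksBallot α →
      G α ∈ TwoSidedIdeal.span {x | ∃ r : ℕ, 1 ≤ r ∧ r ≤ n ∧ x = Fq n r} by
    exact H (Sset α).card α le_rfl hα
  -- the base case : `Sset α = ∅`
  have hbase : ∀ α : Fin n → Bool, Sset α = ∅ → BreaksBallot α →
      G α ∈ TwoSidedIdeal.span {x | ∃ r : ℕ, 1 ≤ r ∧ r ≤ n ∧ x = Fq n r} := by
    intro α hS hα
    have hdc := downward_closed_of_Sset_empty α hS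
    have heq := eq_initial_of_downward_closed α hdc
    have hsn : onesBelow α n ≤ n := onesBelow_le_n α n
    have hs1 : 1 ≤ onesBelow α n := by
      obtain ⟨r, hrn, hr⟩ := hα
      have := onesBelow_mono α hrn
      omega
    rw [heq, hG1 (onesBelow α n) hsn]
    exact TwoSidedIdeal.subset_span ⟨onesBelow α n, hs1, hsn, rfl⟩
  intro N
  induction N with
  | zero =>
    intro α hcard hα
    exact hbase α (Finset.card_eq_zero.mp (Nat.le_zero.mp hcard)) hα
  | succ N ih =>
    intro α hcard hα
    rcases Finset.eq_empty_or_nonempty (Sset α) with hS | hS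
    · exact hbase α hS hα
    · obtain ⟨p, s, hs, hps, hdecomp⟩ := exists_decomp α hS
      have key := hG2 α p s hs hps
      have hα' : BreaksBallot (wW α p s) := hdecomp ▸ hα
      have hcard' : (Sset (wW α p s)).card ≤ N + 1 := by
        rw [← hdecomp]; exact hcard
      -- memberships of the two pieces via the induction hypothesis
      have hc1 : (Sset (wE α p (p+s))).card ≤ N := by
        have := Finset.card_lt_card (Sset_wE_ssubset α p s hs hps (p+s) (by omega))
        omega
      have hc2 : (Sset (wE α p (p+s-1))).card ≤ N := by
        have := Finset.card_lt_card (Sset_wE_ssubset α p s hs hps (p+s-1) (by omega))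
        omega
      have hm1 := ih _ hc1 (breaks_wE_of_breaks_wW α p s hs hα')
      have hm2 := ih _ hc2 (breaks_wE'_of_breaks_wW α p s hs hps hα')
      rw [hdecomp]
      show G (fun i : Fin n =>
        if (i : ℕ) < p then α i else decide (p < (i : ℕ) ∧ (i : ℕ) ≤ p + s)) ∈ _
      rw [key]
      apply TwoSidedIdeal.sub_mem
      · exact hm1
      · rw [Algebra.smul_def]
        apply TwoSidedIdeal.mul_mem_left
        apply TwoSidedIdeal.mul_mem_left
        exact hm2
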